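/- Let F be a field, A a unital associative F-algebra, J a proper two-sided ideal of A, and n ≥ 2. Let a₁, …, aₙ ∈ A satisfy a_r·a_s ∈ J for all r ≠ s, and put a = a₁ + ⋯ + aₙ. Then, denoting by π : A → A/J the quotient map, spec(π(a)) ∪ {0} = ⋃_{r=1}^{n} spec(π(a_r)), where the spectra are computed in the quotient algebra A/J. -/

import Mathlib

/-- The quotient of a unital associative `F`-algebra by a two-sided ideal is again a unital
`F`-algebra, with structure map the composition of the quotient map with `algebraMap F A`. -/
noncomputable instance quotAlgebra {F A : Type*} [Field F] [Ring A] [Algebra F A]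
    (J : TwoSidedIdeal A) : Algebra F J.ringCon.Quotient :=
  (J.ringCon.mk'.comp (algebraMap F A)).toAlgebra' (by
    intro c x
    induction x using Quotient.ind with
    | _ y =>
      show J.ringCon.mk' (algebraMap F A c) * J.ringCon.mk' y =
        J.ringCon.mk' y * J.ringCon.mk' (algebraMap F A c)
      rw [← map_mul, ← map_mul, Algebra.commutes])

section Aux
variable {R : Type*}

variable {R : Type*}

lemma isUnit_list_prod_iff [Monoid R] :
    ∀ l : List R, l.Pairwise Commute → (IsUnit l.prod ↔ ∀ x ∈ l, IsUnit x) := by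
  intro l
  induction l with
  | nil => simp
  | cons x l ih =>
    intro hp
    rw [List.pairwise_cons] at hp
    have hcomm : Commute x l.prod := Commute.list_prod_right l x hp.1
    rw [List.prod_cons, hcomm.isUnit_mul_iff, ih hp.2]
    simp

lemma mul_list_sum_eq_zero [Ring R] (x : R) :
    ∀ l : List R, (∀ y ∈ l, x * y = 0) → x * l.sum = 0 := by
  intro l
  induction l with
  | nil => simp
  | cons y l ih =>
    intro hz
    rw [List.sum_cons, mul_add, hz y (by simp), ih (fun z hz' => hz z (by simp [hz'])),
      add_zero]

lemma list_prod_sub_central [Ring R] (c : R) (hc : ∀ x, c * x = x * c) :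
    ∀ l : List R, l ≠ [] → l.Pairwise (fun x y => x * y = 0) →
      (l.map (fun x => c - x)).prod = c ^ (l.length - 1) * (c - l.sum) := by
  intro l
  induction l with
  | nil => intro h; exact absurd rfl h
  | cons x l ih =>
    intro _ hp
    rw [List.pairwise_cons] at hp
    rw [List.map_cons, List.prod_cons, List.length_cons, List.sum_cons, Nat.add_sub_cancel]
    rcases eq_or_ne l [] with rfl | hl
    · simp
    · set k := l.length - 1 with hk
      have hcard : k + 1 = l.length := Nat.succ_pred_eq_of_pos (List.length_pos_iff.mpr hl)
      rw [ih hl hp.2]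
      set S := l.sum with hS
      have h1 : x * S = 0 := mul_list_sum_eq_zero x l hp.1
      have h2 : (c - x) * (c - S) = c * (c - (x + S)) := by
        rw [mul_sub, sub_mul, sub_mul, h1, sub_zero, mul_sub, mul_add, hc x]
        abel
      have h3 : (c - x) * c ^ k = c ^ k * (c - x) :=
        (((show Commute c (c - x) from hc _).symm).pow_right k).eq
      calc (c - x) * (c ^ k * (c - S))
          = c ^ k * ((c - x) * (c - S)) := by rw [← mul_assoc, h3, mul_assoc]
        _ = c ^ k * (c * (c - (x + S))) := by rw [h2]
        _ = c ^ (k + 1) * (c - (x + S)) := by rw [← mul_assoc, ← pow_succ]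
        _ = c ^ l.length * (c - (x + S)) := by rw [hcard]

end Aux

/-- Let `J` be a proper two-sided ideal of a unital associative `F`-algebra
`A`, `n ≥ 2`, and `a₁, …, aₙ ∈ A` with `a_r · a_s ∈ J` whenever `r ≠ s`.  Writing
`π : A → A/J` for the quotient map and `a = a₁ + ⋯ + aₙ`, one has
`spec(π a) ∪ {0} = ⋃ᵣ spec(π aᵣ)`, the spectra being computed in `A/J`. -/
theorem stmt9 {F A : Type*} [Field F] [Ring A] [Algebra F A]
    (J : TwoSidedIdeal A) (hJ : J ≠ ⊤) (n : ℕ) (hn : 2 ≤ n)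
    (a : Fin n → A) (h : ∀ r s : Fin n, r ≠ s → a r * a s ∈ J) :
    spectrum F (J.ringCon.mk' (∑ r, a r)) ∪ {0} =
      ⋃ r : Fin n, spectrum F (J.ringCon.mk' (a r)) := by
  set Q := J.ringCon.Quotient with hQ
  set π := J.ringCon.mk' with hπ
  set b : Fin n → Q := fun r => π (a r) with hbdef
  have hmk0 : ∀ x : A, x ∈ J → π x = 0 := fun x hx => Quotient.sound' ((J.mem_iff x).mp hx)
  have hb0 : ∀ r s : Fin n, r ≠ s → b r * b s = 0 := fun r s hrs => by
    show π (a r) * π (a s) = 0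
    rw [← map_mul]; exact hmk0 _ (h r s hrs)
  have hnontriv : Nontrivial Q := by
    refine ⟨1, 0, fun e => hJ ?_⟩
    have e' : π (1 : A) = 0 := by rw [map_one]; exact e
    have h1 : (1 : A) ∈ J := (J.mem_iff 1).mpr (Quotient.eq''.mp e')
    exact eq_top_iff.mpr fun x _ => by simpa using J.mul_mem_left x 1 h1
  have hsum : π (∑ r, a r) = ∑ r, b r := map_sum π a Finset.univ
  have hex : ∃ i : Fin n, ¬IsUnit (b i) := by
    by_contra hcon
    push_neg at hcon
    have h01 : (⟨0, by omega⟩ : Fin n) ≠ (⟨1, by omega⟩ : Fin n) := fun e => by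
      simpa using congrArg Fin.val e
    have := (hcon ⟨0, by omega⟩).mul (hcon ⟨1, by omega⟩)
    rw [hb0 _ _ h01] at this
    exact not_isUnit_zero this
  ext μ
  simp only [Set.mem_union, Set.mem_singleton_iff, Set.mem_iUnion, spectrum.mem_iff, hsum]
  rcases eq_or_ne μ 0 with rfl | hμ
  · simp only [map_zero, zero_sub, eq_self_iff_true, or_true, true_iff, IsUnit.neg_iff]
    exact hex
  · simp only [hμ, or_false]
    set c : Q := algebraMap F Q μ with hc
    have hcen : ∀ x : Q, c * x = x * c := fun x => Algebra.commutes μ x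
    have hcu : IsUnit c := (isUnit_iff_ne_zero.mpr hμ).map (algebraMap F Q)
    set l : List Q := List.ofFn b with hl
    have hlen : l.length = n := List.length_ofFn
    have hlne : l ≠ [] := by
      intro e
      rw [e] at hlen
      simp at hlen; omega
    have hpair : l.Pairwise (fun x y => x * y = 0) := by
      rw [hl, List.pairwise_ofFn]
      exact fun i j hij => hb0 i j (Fin.ne_of_lt hij)
    have hsum' : l.sum = ∑ r, b r := by rw [hl, List.sum_ofFn]
    have hmap : l.map (fun x => c - x) = List.ofFn (fun r => c - b r) := by
      rw [hl, List.map_ofFn]; rfl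
    have key : (List.ofFn (fun r => c - b r)).prod = c ^ (n - 1) * (c - ∑ r, b r) := by
      rw [← hmap, list_prod_sub_central c hcen l hlne hpair, hlen, hsum']
    have hpaircomm : (List.ofFn (fun r => c - b r)).Pairwise Commute := by
      rw [List.pairwise_ofFn]
      intro i j hij
      show (c - b i) * (c - b j) = (c - b j) * (c - b i)
      rw [sub_mul, sub_mul, mul_sub, mul_sub, mul_sub, mul_sub,
        hb0 i j (Fin.ne_of_lt hij), hb0 j i (Fin.ne_of_lt hij).symm,
        ← hcen (b i), ← hcen (b j)]
      abel
    have hunit_iff : IsUnit (c - ∑ r, b r) ↔ ∀ r : Fin n, IsUnit (c - b r) := by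
      have hcup : IsUnit (c ^ (n - 1)) := hcu.pow _
      rw [← Units.isUnit_units_mul hcup.unit (c - ∑ r, b r)]
      rw [IsUnit.unit_spec, ← key, isUnit_list_prod_iff _ hpaircomm]
      constructor
      · intro hall r
        exact hall _ (by rw [List.mem_ofFn]; exact ⟨r, rfl⟩)
      · intro hall x hx
        rw [List.mem_ofFn] at hx
        obtain ⟨r, rfl⟩ := hx
        exact hall r
    constructor
    · intro hnu
      by_contra hcon2
      push_neg at hcon2
      exact hnu (hunit_iff.mpr hcon2)
    · rintro ⟨i, hi⟩ hu
      exact hi (hunit_iff.mp hu i)
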